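/- arXiv:2411.01346 — 2 statements merged into one kernel-verified Lean document; each statement's English description precedes it below -/
import Mathlib

section
/- Let U ⊆ ℝⁿ be open and convex, let e: U → ℝ be continuously differentiable, and let ū ∈ U. Assume ∇e is semidifferentiable at ū, i.e., for every h ∈ ℝⁿ the limit d(h) := lim_{h' → h, t ↓ 0} (∇e(ū + t h') − ∇e(ū))/t exists. Then lim_{u → ū, u ≠ ū} (e(u) − e(ū) − ½⟨∇e(u) + ∇e(ū), u − ū⟩)/‖u − ū‖² = 0. -/
open Filter Topology Metric Set
open scoped RealInnerProductSpace NNReal ENNReal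

noncomputable section

/-- Euclidean space `ℝⁿ`. -/
abbrev Euc (n : ℕ) : Type := EuclideanSpace ℝ (Fin n)

section NormedDefs

variable {X Y : Type*} [NormedAddCommGroup X] [NormedSpace ℝ X]
  [NormedAddCommGroup Y] [NormedSpace ℝ Y]

/-- The (Bouligand) tangent cone to `Ω` at `z`. -/
def tanCone (Ω : Set X) (z : X) : Set X :=
  {w | ∃ (t : ℕ → ℝ) (wk : ℕ → X), (∀ k, 0 < t k) ∧ Tendsto t atTop (𝓝 0) ∧
      Tendsto wk atTop (𝓝 w) ∧ ∀ k, z + t k • wk k ∈ Ω}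

/-- The regular (Clarke) tangent cone to `Ω` at `z`. -/
def clarkeCone (Ω : Set X) (z : X) : Set X :=
  {w | ∀ (zk : ℕ → X) (t : ℕ → ℝ), (∀ k, zk k ∈ Ω) → Tendsto zk atTop (𝓝 z) →
      (∀ k, 0 < t k) → Tendsto t atTop (𝓝 0) →
      ∃ wk : ℕ → X, Tendsto wk atTop (𝓝 w) ∧ ∀ k, zk k + t k • wk k ∈ Ω}

/-- The paratingent cone to `Ω` at `z`. -/
def paraCone (Ω : Set X) (z : X) : Set X :=
  {w | ∃ (zk : ℕ → X) (t : ℕ → ℝ) (wk : ℕ → X), (∀ k, zk k ∈ Ω) ∧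
      Tendsto zk atTop (𝓝 z) ∧ (∀ k, 0 < t k) ∧ Tendsto t atTop (𝓝 0) ∧
      Tendsto wk atTop (𝓝 w) ∧ ∀ k, zk k + t k • wk k ∈ Ω}

/-- `Ω` is strictly smooth at `z` if the Clarke tangent cone and the paratingent
cone coincide there. -/
def StrictlySmoothAt (Ω : Set X) (z : X) : Prop := clarkeCone Ω z = paraCone Ω z

/-- `Ω` is geometrically derivable at `z`. -/
def GeomDerivableAt (Ω : Set X) (z : X) : Prop :=
  ∀ w ∈ tanCone Ω z, ∀ t : ℕ → ℝ, (∀ k, 0 < t k) → Tendsto t atTop (𝓝 0) →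
    ∃ wk : ℕ → X, Tendsto wk atTop (𝓝 w) ∧ ∀ k, z + t k • wk k ∈ Ω

/-- `Ω` is locally closed at `z`. -/
def LocallyClosedAt (Ω : Set X) (z : X) : Prop :=
  ∃ V : Set X, V ∈ 𝓝 z ∧ IsClosed V ∧ IsClosed (Ω ∩ V)

/-- The set `s` is a linear subspace. -/
def IsLinearSubspace (s : Set X) : Prop := ∃ S : Submodule ℝ X, (S : Set X) = s

/-- The set `s` is a linear subspace of dimension `d`. -/
def HasDim (s : Set X) (d : ℕ) : Prop :=
  ∃ S : Submodule ℝ X, (S : Set X) = s ∧ Module.finrank ℝ S = d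

/-- The graph of a set-valued mapping. -/
def gphOf (Fm : X → Set Y) : Set (X × Y) := {p | p.2 ∈ Fm p.1}

/-- The graph of a single-valued mapping defined on `U`. -/
def gphOn (f : X → Y) (U : Set X) : Set (X × Y) := {p | p.1 ∈ U ∧ p.2 = f p.1}

/-- `f` (defined on `U`) is strictly continuous (locally Lipschitz) at `xb`. -/
def StrictlyContinuousAt' (f : X → Y) (U : Set X) (xb : X) : Prop :=
  ∃ U' ∈ 𝓝 xb, U' ⊆ U ∧ ∃ κ : ℝ, 0 ≤ κ ∧
    ∀ x ∈ U', ∀ x' ∈ U', ‖f x - f x'‖ ≤ κ * ‖x - x'‖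

/-- `f` (defined on `U`) is calm at `xb`. -/
def CalmAt' (f : X → Y) (U : Set X) (xb : X) : Prop :=
  ∃ U' ∈ 𝓝 xb, U' ⊆ U ∧ ∃ κ : ℝ, 0 ≤ κ ∧ ∀ x ∈ U', ‖f x - f xb‖ ≤ κ * ‖x - xb‖

/-- `f` (defined on `U`) is strictly differentiable at `xb`. -/
def StrictDiffOnAt (f : X → Y) (U : Set X) (xb : X) : Prop :=
  ∃ A : X →L[ℝ] Y, ∀ ε : ℝ, 0 < ε → ∃ δ > 0, ∀ x ∈ U, ∀ x' ∈ U,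
    ‖x - xb‖ < δ → ‖x' - xb‖ < δ → ‖f x' - f x - A (x' - x)‖ ≤ ε * ‖x' - x‖

/-- `f` (defined on `U`) is Fréchet differentiable at `xb`. -/
def FrechetDiffOnAt (f : X → Y) (U : Set X) (xb : X) : Prop :=
  ∃ A : X →L[ℝ] Y, ∀ ε : ℝ, 0 < ε → ∃ δ > 0, ∀ x ∈ U,
    ‖x - xb‖ < δ → ‖f x - f xb - A (x - xb)‖ ≤ ε * ‖x - xb‖

/-- The B-Jacobian (Bouligand limiting Jacobian) of `f` at `xb`. -/
def BJacobian (f : X → Y) (U : Set X) (xb : X) : Set (X →L[ℝ] Y) :=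
  {A | ∃ (xk : ℕ → X) (Ak : ℕ → X →L[ℝ] Y),
      (∀ k, xk k ∈ U ∧ HasFDerivAt f (Ak k) (xk k)) ∧
      Tendsto xk atTop (𝓝 xb) ∧ Tendsto Ak atTop (𝓝 A)}

/-- `Ω ⊆ X` is a Lipschitz manifold of dimension `d` (and codimension `c`) around `z`:
up to a `C¹` change of coordinates `Φ`, `Ω` locally coincides with the graph of a
Lipschitz mapping `f : U → ℝᶜ`, `U ⊆ ℝᵈ` open. -/
def IsLipschitzManifoldAt (Ω : Set X) (d c : ℕ) (z : X) : Prop :=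
  ∃ (W : Set X) (Φ : X → Euc d × Euc c) (Ψ : Euc d × Euc c → X)
    (U : Set (Euc d)) (f : Euc d → Euc c) (K : ℝ≥0),
    IsOpen W ∧ z ∈ W ∧ IsOpen (Φ '' W) ∧
    ContDiffOn ℝ 1 Φ W ∧ ContDiffOn ℝ 1 Ψ (Φ '' W) ∧
    (∀ x ∈ W, Ψ (Φ x) = x) ∧ (∀ y ∈ Φ '' W, Φ (Ψ y) = y) ∧
    IsOpen U ∧ LipschitzOnWith K f U ∧
    Φ '' (Ω ∩ W) = {p | p.1 ∈ U ∧ p.2 = f p.1}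

/-- As `IsLipschitzManifoldAt`, with the Lipschitz mapping `f` moreover strictly
differentiable at the transformed reference point. -/
def IsGraphStrictDiffAt (Ω : Set X) (d c : ℕ) (z : X) : Prop :=
  ∃ (W : Set X) (Φ : X → Euc d × Euc c) (Ψ : Euc d × Euc c → X)
    (U : Set (Euc d)) (f : Euc d → Euc c) (K : ℝ≥0),
    IsOpen W ∧ z ∈ W ∧ IsOpen (Φ '' W) ∧
    ContDiffOn ℝ 1 Φ W ∧ ContDiffOn ℝ 1 Ψ (Φ '' W) ∧
    (∀ x ∈ W, Ψ (Φ x) = x) ∧ (∀ y ∈ Φ '' W, Φ (Ψ y) = y) ∧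
    IsOpen U ∧ LipschitzOnWith K f U ∧
    Φ '' (Ω ∩ W) = {p | p.1 ∈ U ∧ p.2 = f p.1} ∧
    StrictDiffOnAt f U (Φ z).1

/-- Strong metric subregularity of a set-valued mapping at `(xb, yb)`. -/
def StronglySubregAt (Fm : X → Set Y) (xb : X) (yb : Y) : Prop :=
  ∃ κ : ℝ≥0, ∃ U ∈ 𝓝 xb, ∀ x ∈ U,
    (‖x - xb‖₊ : ℝ≥0∞) ≤ (κ : ℝ≥0∞) * EMetric.infEdist yb (Fm x)

/-- Metric regularity of a set-valued mapping around `(xb, yb)`. -/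
def MetricallyRegularAround (Fm : X → Set Y) (xb : X) (yb : Y) : Prop :=
  ∃ κ : ℝ≥0, ∃ U ∈ 𝓝 xb, ∃ V ∈ 𝓝 yb, ∀ x ∈ U, ∀ y ∈ V,
    EMetric.infEdist x {x' | y ∈ Fm x'} ≤ (κ : ℝ≥0∞) * EMetric.infEdist y (Fm x)

/-- Strong metric regularity of a set-valued mapping around `(xb, yb)`. -/
def StronglyRegularAround (Fm : X → Set Y) (xb : X) (yb : Y) : Prop :=
  MetricallyRegularAround Fm xb yb ∧
  ∃ (U' : Set X) (V' : Set Y) (h : Y → X), IsOpen U' ∧ IsOpen V' ∧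
    xb ∈ U' ∧ yb ∈ V' ∧ h yb = xb ∧
    gphOf Fm ∩ (U' ×ˢ V') = {p | p.2 ∈ V' ∧ p.1 = h p.2}

end NormedDefs

section InnerDefs

variable {E F : Type*} [NormedAddCommGroup E] [InnerProductSpace ℝ E]
  [NormedAddCommGroup F] [InnerProductSpace ℝ F]

/-- The regular (Fréchet) normal cone: the polar of the tangent cone. -/
def regNormal (Ω : Set E) (z : E) : Set E := {v | ∀ w ∈ tanCone Ω z, ⟪v, w⟫ ≤ 0}

/-- The limiting (Mordukhovich) normal cone. -/
def limNormal (Ω : Set E) (z : E) : Set E :=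
  {v | ∃ zk vk : ℕ → E, (∀ k, zk k ∈ Ω) ∧ Tendsto zk atTop (𝓝 z) ∧
      (∀ k, vk k ∈ regNormal Ω (zk k)) ∧ Tendsto vk atTop (𝓝 v)}

/-- `Ω` is normally regular at `z`. -/
def NormallyRegularAt (Ω : Set E) (z : E) : Prop := regNormal Ω z = limNormal Ω z

/-- The orthogonal complement (as a set) of a set. -/
def orthSet (s : Set E) : Set E := {v | ∀ w ∈ s, ⟪v, w⟫ = 0}

/-- `Ω` is semismooth* at `zb`. -/
def SemismoothStarAt (Ω : Set E) (zb : E) : Prop :=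
  ∀ ε : ℝ, 0 < ε → ∃ δ > 0, ∀ z ∈ Ω, ‖z - zb‖ < δ → ∀ v ∈ limNormal Ω z,
    |⟪v, z - zb⟫| ≤ ε * ‖z - zb‖ * ‖v‖

/-- The canonical inner product of the product of two inner product spaces. -/
def inner2 (p q : E × F) : ℝ := ⟪p.1, q.1⟫ + ⟪p.2, q.2⟫

/-- The regular normal cone for subsets of a product space. -/
def regNormal2 (Ω : Set (E × F)) (z : E × F) : Set (E × F) :=
  {v | ∀ w ∈ tanCone Ω z, inner2 v w ≤ 0}

/-- The limiting normal cone for subsets of a product space. -/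
def limNormal2 (Ω : Set (E × F)) (z : E × F) : Set (E × F) :=
  {v | ∃ zk vk : ℕ → E × F, (∀ k, zk k ∈ Ω) ∧ Tendsto zk atTop (𝓝 z) ∧
      (∀ k, vk k ∈ regNormal2 Ω (zk k)) ∧ Tendsto vk atTop (𝓝 v)}

/-- Normal regularity for subsets of a product space. -/
def NormallyRegular2At (Ω : Set (E × F)) (z : E × F) : Prop :=
  regNormal2 Ω z = limNormal2 Ω z

/-- Orthogonal complement (as a set) in a product space. -/
def orthSet2 (s : Set (E × F)) : Set (E × F) := {v | ∀ w ∈ s, inner2 v w = 0}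

/-- The graph of the limiting coderivative of a mapping with graph `Γ` at `z`:
`{(y*, x*) : (x*, -y*) ∈ N_Γ(z)}`. -/
def coderivGraph (Γ : Set (E × F)) (z : E × F) : Set (F × E) :=
  {q | (q.2, -q.1) ∈ limNormal2 Γ z}

/-- The semismooth* property for subsets of a product space (i.e. for mappings). -/
def SemismoothStar2At (Ω : Set (E × F)) (zb : E × F) : Prop :=
  ∀ ε : ℝ, 0 < ε → ∃ δ > 0, ∀ z ∈ Ω, ‖z - zb‖ < δ → ∀ v ∈ limNormal2 Ω z,
    |inner2 v (z - zb)| ≤ ε * ‖z - zb‖ * ‖v‖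

/-- The regular subdifferential of an extended-real-valued function. -/
def regSubdiff (φ : E → EReal) (xb : E) : Set E :=
  {v | φ xb ≠ ⊤ ∧ φ xb ≠ ⊥ ∧ ∀ ε : ℝ, 0 < ε → ∃ δ > 0, ∀ x, ‖x - xb‖ < δ →
      φ xb + ((⟪v, x - xb⟫ - ε * ‖x - xb‖ : ℝ) : EReal) ≤ φ x}

/-- The limiting (Mordukhovich) subdifferential. -/
def limSubdiff (φ : E → EReal) (xb : E) : Set E :=
  {v | ∃ xk vk : ℕ → E, Tendsto xk atTop (𝓝 xb) ∧
      Tendsto (fun k => φ (xk k)) atTop (𝓝 (φ xb)) ∧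
      (∀ k, vk k ∈ regSubdiff φ (xk k)) ∧ Tendsto vk atTop (𝓝 v)}

/-- `φ` is prox-regular at `xb` for `vb` with parameters `r ≥ 0` and `ε > 0`. -/
def ProxRegular (φ : E → EReal) (xb vb : E) (r ε : ℝ) : Prop :=
  ∀ x' x v, ‖x' - xb‖ < ε → v ∈ limSubdiff φ x → ‖x - xb‖ < ε → ‖v - vb‖ < ε →
    φ x < φ xb + (ε : EReal) →
    φ x + ((⟪v, x' - x⟫ - r / 2 * ‖x' - x‖ ^ 2 : ℝ) : EReal) ≤ φ x'

/-- The graph of the `φ`-attentive `ε`-localization of `∂φ` around `(xb, vb)`. -/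
def attLocGraph (φ : E → EReal) (xb vb : E) (ε : ℝ) : Set (E × E) :=
  {p | p.2 ∈ limSubdiff φ p.1 ∧ ‖p.1 - xb‖ < ε ∧ ‖p.2 - vb‖ < ε ∧
      φ p.1 < φ xb + (ε : EReal)}

end InnerDefs

/-- The map `ℝⁿ → ℝᵈ × ℝᶜ` obtained from a permutation (re-indexing) of the
coordinates followed by splitting them into the first `d` and the last `c` ones. -/
def permSplit {n d c : ℕ} (e : Fin n ≃ (Fin d ⊕ Fin c)) (z : Euc n) : Euc d × Euc c :=
  (show Euc d from WithLp.toLp 2 (fun i => z (e.symm (Sum.inl i))),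
   show Euc c from WithLp.toLp 2 (fun j => z (e.symm (Sum.inr j))))
section TrapAux
open MeasureTheory intervalIntegral

-- FTC lemma
lemma aux_ftc {n : ℕ} {U : Set (Euc n)} (hconv : Convex ℝ U)
    {e : Euc n → ℝ} {g : Euc n → Euc n} {ub : Euc n} (hu : ub ∈ U)
    (hgrad : ∀ u ∈ U, HasGradientAt e (g u) u) (hcont : ContinuousOn g U)
    {v : Euc n} (hv : v ∈ U) :
    e v - e ub = ∫ t in (0:ℝ)..1, ⟪g (ub + t • (v - ub)), v - ub⟫ := by
  have hmem : ∀ t : ℝ, t ∈ Set.Icc (0:ℝ) 1 → ub + t • (v - ub) ∈ U := fun t ht =>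
    hconv.add_smul_sub_mem hu hv ht
  have hpathcont : ContinuousOn (fun t : ℝ => g (ub + t • (v - ub))) (Set.Icc 0 1) := by
    apply hcont.comp (by fun_prop) hmem
  have hderiv : ∀ t ∈ Set.uIcc (0:ℝ) 1,
      HasDerivAt (fun t : ℝ => e (ub + t • (v - ub)))
        (⟪g (ub + t • (v - ub)), v - ub⟫) t := by
    intro t ht
    rw [Set.uIcc_of_le (by norm_num)] at ht
    have hx : HasDerivAt (fun t : ℝ => ub + t • (v - ub)) (v - ub) t := by
      simpa using ((hasDerivAt_id t).smul_const (v - ub)).const_add ub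
    have := ((hgrad _ (hmem t ht)).hasFDerivAt.comp_hasDerivAt t hx)
    simpa [InnerProductSpace.toDual_apply_apply, Function.comp_def] using this
  have hint : IntervalIntegrable (fun t : ℝ => ⟪g (ub + t • (v - ub)), v - ub⟫)
      MeasureTheory.volume 0 1 := by
    apply ContinuousOn.intervalIntegrable
    rw [Set.uIcc_of_le (by norm_num)]
    exact (hpathcont.inner continuousOn_const)
  have := intervalIntegral.integral_eq_sub_of_hasDerivAt hderiv hint
  simp only [one_smul, zero_smul, add_zero, add_sub_cancel] at this
  rw [this]

-- uniform bound lemma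
lemma aux_bound {n : ℕ} {g : Euc n → Euc n} {ub : Euc n}
    (hsemi : ∀ h : Euc n, ∃ d : Euc n, ∀ (hk : ℕ → Euc n) (tk : ℕ → ℝ),
      Tendsto hk atTop (𝓝 h) → (∀ k, 0 < tk k) → Tendsto tk atTop (𝓝 0) →
      Tendsto (fun k => (tk k)⁻¹ • (g (ub + tk k • hk k) - g ub)) atTop (𝓝 d)) :
    ∃ δ : ℝ, 0 < δ ∧ ∃ M : ℝ, ∀ s : ℝ, 0 < s → s ≤ δ → ∀ h : Euc n, ‖h‖ ≤ 2 →
      ‖g (ub + s • h) - g ub‖ ≤ M * s := by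
  by_contra hc
  push_neg at hc
  have hex : ∀ k : ℕ, ∃ s : ℝ, 0 < s ∧ s ≤ 1 / (k + 1) ∧ ∃ h : Euc n, ‖h‖ ≤ 2 ∧
      (k + 1 : ℝ) * s < ‖g (ub + s • h) - g ub‖ := by
    intro k
    obtain ⟨s, hs0, hs1, h, hh, hlt⟩ := hc (1 / (k + 1)) (by positivity) (k + 1)
    exact ⟨s, hs0, hs1, h, hh, hlt⟩
  choose s hs0 hsle h hh hlt using hex
  -- s → 0
  have hstend : Tendsto s atTop (𝓝 0) := by
    apply squeeze_zero (fun k => (hs0 k).le) hsle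
    exact tendsto_one_div_add_atTop_nhds_zero_nat
  -- compactness
  obtain ⟨hst, -, φ, hφ, hconv⟩ := (isCompact_closedBall (0 : Euc n) 2).tendsto_subseq
    (x := h) (fun k => by simpa [mem_closedBall, dist_eq_norm] using hh k)
  obtain ⟨d, hd⟩ := hsemi hst
  have hq := hd (fun j => h (φ j)) (fun j => s (φ j)) hconv (fun j => hs0 (φ j))
    (hstend.comp hφ.tendsto_atTop)
  have hnorm : Tendsto (fun j => ‖(s (φ j))⁻¹ • (g (ub + s (φ j) • h (φ j)) - g ub)‖)
      atTop (𝓝 ‖d‖) := hq.norm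
  have hlb : ∀ j : ℕ, (j + 1 : ℝ) ≤ ‖(s (φ j))⁻¹ • (g (ub + s (φ j) • h (φ j)) - g ub)‖ := by
    intro j
    have h2 : (0:ℝ) < s (φ j) := hs0 (φ j)
    have h1 : ((φ j : ℝ) + 1) * s (φ j) ≤ ‖g (ub + s (φ j) • h (φ j)) - g ub‖ :=
      (hlt (φ j)).le
    have h3 : ((φ j : ℝ) + 1) ≤ (s (φ j))⁻¹ * ‖g (ub + s (φ j) • h (φ j)) - g ub‖ := by
      rw [← div_eq_inv_mul, le_div_iff₀ h2]; exact h1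
    have h4 : (j + 1 : ℝ) ≤ (φ j : ℝ) + 1 := by
      have : j ≤ φ j := hφ.le_apply
      have : (j : ℝ) ≤ (φ j : ℝ) := Nat.cast_le.2 this
      linarith
    rw [norm_smul, norm_inv, Real.norm_eq_abs, abs_of_pos h2]
    linarith
  have : Tendsto (fun j => ‖(s (φ j))⁻¹ • (g (ub + s (φ j) • h (φ j)) - g ub)‖) atTop atTop :=
    tendsto_atTop_mono hlb (tendsto_atTop_add_const_right _ 1 tendsto_natCast_atTop_atTop)
  exact not_tendsto_atTop_of_tendsto_nhds hnorm this

lemma aux_core {n : ℕ} {U : Set (Euc n)} (hconv : Convex ℝ U)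
    {e : Euc n → ℝ} {g : Euc n → Euc n} {ub : Euc n} (hu : ub ∈ U)
    (hgrad : ∀ u ∈ U, HasGradientAt e (g u) u) (hcont : ContinuousOn g U)
    (hsemi : ∀ h : Euc n, ∃ d : Euc n, ∀ (hk : ℕ → Euc n) (tk : ℕ → ℝ),
      Tendsto hk atTop (𝓝 h) → (∀ k, 0 < tk k) → Tendsto tk atTop (𝓝 0) →
      Tendsto (fun k => (tk k)⁻¹ • (g (ub + tk k • hk k) - g ub)) atTop (𝓝 d))
    (v : ℕ → Euc n) (hvU : ∀ k, v k ∈ U) (hvne : ∀ k, v k ≠ ub)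
    (hvt : Tendsto v atTop (𝓝 ub))
    (w : Euc n) (hw : Tendsto (fun k => ‖v k - ub‖⁻¹ • (v k - ub)) atTop (𝓝 w)) :
    Tendsto (fun k => (e (v k) - e ub - (1 / 2) * ⟪g (v k) + g ub, v k - ub⟫) / ‖v k - ub‖ ^ 2)
      atTop (𝓝 0) := by
  set τ : ℕ → ℝ := fun k => ‖v k - ub‖ with hτdef
  set wk : ℕ → Euc n := fun k => (τ k)⁻¹ • (v k - ub) with hwkdef
  have hτpos : ∀ k, 0 < τ k := fun k => by
    simpa [hτdef, sub_eq_zero] using (hvne k)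
  have hτtend : Tendsto τ atTop (𝓝 0) := by
    have : Tendsto (fun k => v k - ub) atTop (𝓝 (ub - ub)) := hvt.sub_const ub
    simpa [hτdef] using this.norm
  have hvk : ∀ k, v k = ub + τ k • wk k := by
    intro k
    rw [hwkdef, smul_smul, mul_inv_cancel₀ (hτpos k).ne', one_smul]
    abel
  have hwknorm : ∀ k, ‖wk k‖ = 1 := by
    intro k
    rw [hwkdef]
    simp only [norm_smul, norm_inv, Real.norm_eq_abs, abs_of_pos (hτpos k)]
    exact inv_mul_cancel₀ (hτpos k).ne'
  obtain ⟨d, hd⟩ := hsemi w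
  -- the integrand
  set F : ℕ → ℝ → ℝ := fun k t =>
    ⟪(τ k)⁻¹ • (g (ub + (t * τ k) • wk k) - g ub)
      - (1 / 2 : ℝ) • ((τ k)⁻¹ • (g (v k) - g ub)), wk k⟫ with hFdef
  -- path continuity
  have hpath : ∀ k, ContinuousOn (fun t : ℝ => g (ub + (t * τ k) • wk k)) (Set.Icc 0 1) := by
    intro k
    apply hcont.comp (by fun_prop)
    intro t ht
    have harg : ub + (t * τ k) • wk k = ub + t • (v k - ub) := by
      rw [hwkdef, smul_smul, mul_assoc, mul_inv_cancel₀ (hτpos k).ne', mul_one]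
    show ub + (t * τ k) • wk k ∈ U
    rw [harg]
    exact hconv.add_smul_sub_mem hu (hvU k) ht
  have hFcont : ∀ k, ContinuousOn (F k) (Set.Icc 0 1) := by
    intro k
    apply ContinuousOn.inner ?_ continuousOn_const
    exact (((hpath k).sub continuousOn_const).const_smul (τ k)⁻¹).sub
      (continuousOn_const (c := (1 / 2 : ℝ) • ((τ k)⁻¹ • (g (v k) - g ub))))
  -- identification of F's integral with the difference quotient
  have hFeq : ∀ k, (∫ t in (0:ℝ)..1, F k t)
      = (e (v k) - e ub - (1 / 2) * ⟪g (v k) + g ub, v k - ub⟫) / ‖v k - ub‖ ^ 2 := by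
    intro k
    have hτne : (τ k) ≠ 0 := (hτpos k).ne'
    have hFpt : ∀ t : ℝ, F k t =
        (⟪g (ub + t • (v k - ub)), v k - ub⟫
          - (1 / 2) * ⟪g (v k) + g ub, v k - ub⟫) / ‖v k - ub‖ ^ 2 := by
      intro t
      have harg : ub + (t * τ k) • wk k = ub + t • (v k - ub) := by
        rw [hwkdef, smul_smul, mul_assoc, mul_inv_cancel₀ hτne, mul_one]
      rw [hFdef]
      simp only [harg]
      simp only [harg, hwkdef, inner_sub_left, inner_add_left, real_inner_smul_left,
        real_inner_smul_right, hτdef]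
      field_simp
      ring
    have hp : IntervalIntegrable (fun t : ℝ => ⟪g (ub + t • (v k - ub)), v k - ub⟫)
        MeasureTheory.volume 0 1 := by
      apply ContinuousOn.intervalIntegrable
      rw [Set.uIcc_of_le (by norm_num)]
      apply ContinuousOn.inner ?_ continuousOn_const
      apply hcont.comp (by fun_prop)
      intro t ht
      exact hconv.add_smul_sub_mem hu (hvU k) ht
    simp only [hFpt, div_eq_mul_inv]
    rw [intervalIntegral.integral_mul_const,
      intervalIntegral.integral_sub hp intervalIntegrable_const,
      intervalIntegral.integral_const, ← aux_ftc hconv hu hgrad hcont (hvU k)]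
    simp [sub_sub]
  -- pointwise limit
  have hlim : ∀ t : ℝ, t ∈ Set.Ioc (0:ℝ) 1 →
      Tendsto (fun k => F k t) atTop (𝓝 ((t - 1 / 2) * ⟪d, w⟫)) := by
    intro t ht
    have hA0 : Tendsto (fun k => (t * τ k)⁻¹ • (g (ub + (t * τ k) • wk k) - g ub))
        atTop (𝓝 d) := by
      apply hd wk (fun k => t * τ k) hw (fun k => mul_pos ht.1 (hτpos k))
      simpa using (tendsto_const_nhds (x := t)).mul hτtend
    have hA : Tendsto (fun k => (τ k)⁻¹ • (g (ub + (t * τ k) • wk k) - g ub))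
        atTop (𝓝 (t • d)) := by
      have h2 := hA0.const_smul t
      have heq : (fun k => (τ k)⁻¹ • (g (ub + (t * τ k) • wk k) - g ub))
          = fun k => t • (t * τ k)⁻¹ • (g (ub + (t * τ k) • wk k) - g ub) := by
        funext k
        have ht0 : t ≠ 0 := ht.1.ne'
        have hτne : τ k ≠ 0 := (hτpos k).ne'
        have hsc : t * (t * τ k)⁻¹ = (τ k)⁻¹ := by field_simp
        conv_rhs => rw [smul_smul]
        rw [hsc]
      rw [heq]
      exact h2
    have hB : Tendsto (fun k => (τ k)⁻¹ • (g (v k) - g ub)) atTop (𝓝 d) := by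
      have := hd wk τ hw hτpos hτtend
      convert this using 3 with k
      exact (hvk k) ▸ rfl
    have := Filter.Tendsto.inner (𝕜 := ℝ) (hA.sub (hB.const_smul (1 / 2 : ℝ))) hw
    convert this using 2
    simp only [inner_sub_left, real_inner_smul_left]
    ring
  -- dominated convergence
  obtain ⟨δ, hδ, M, hM⟩ := aux_bound hsemi
  have hM0 : 0 ≤ M := by
    have := hM δ hδ le_rfl 0 (by simp)
    simp only [smul_zero, add_zero, sub_self, norm_zero] at this
    nlinarith
  have hbd : ∀ᶠ k in atTop, ∀ t ∈ Set.Ioc (0:ℝ) 1, ‖F k t‖ ≤ 3 / 2 * M := by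
    filter_upwards [hτtend.eventually_le_const hδ] with k hk
    intro t ht
    have hτk := hτpos k
    have hs1 : 0 < t * τ k := mul_pos ht.1 hτk
    have hs2 : t * τ k ≤ δ := by nlinarith [ht.2, hk]
    have hA := hM (t * τ k) hs1 hs2 (wk k) (by rw [hwknorm k]; norm_num)
    have hBb := hM (τ k) hτk hk (wk k) (by rw [hwknorm k]; norm_num)
    have hAn : ‖(τ k)⁻¹ • (g (ub + (t * τ k) • wk k) - g ub)‖ ≤ M := by
      rw [norm_smul, norm_inv, Real.norm_eq_abs, abs_of_pos hτk]
      calc (τ k)⁻¹ * ‖g (ub + (t * τ k) • wk k) - g ub‖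
          ≤ (τ k)⁻¹ * (M * (t * τ k)) := by
            apply mul_le_mul_of_nonneg_left hA (by positivity)
        _ = M * t := by field_simp
        _ ≤ M := by nlinarith [ht.2, ht.1.le]
    have hBn : ‖(τ k)⁻¹ • (g (v k) - g ub)‖ ≤ M := by
      rw [norm_smul, norm_inv, Real.norm_eq_abs, abs_of_pos hτk, hvk k]
      calc (τ k)⁻¹ * ‖g (ub + τ k • wk k) - g ub‖ ≤ (τ k)⁻¹ * (M * τ k) := by
            apply mul_le_mul_of_nonneg_left hBb (by positivity)
        _ = M := by field_simp
    calc ‖F k t‖ ≤ ‖(τ k)⁻¹ • (g (ub + (t * τ k) • wk k) - g ub)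
          - (1 / 2 : ℝ) • ((τ k)⁻¹ • (g (v k) - g ub))‖ * ‖wk k‖ := by
          rw [hFdef]; exact norm_inner_le_norm _ _
      _ ≤ (M + 1 / 2 * M) * 1 := by
          rw [hwknorm k]
          gcongr
          apply (norm_sub_le _ _).trans
          gcongr
          rw [norm_smul]
          simp only [Real.norm_eq_abs]
          rw [abs_of_pos (by norm_num : (0:ℝ) < 1/2)]
          nlinarith [norm_nonneg ((τ k)⁻¹ • (g (v k) - g ub)), hBn]
      _ = 3 / 2 * M := by ring
  have hmeas : ∀ᶠ k in atTop, AEStronglyMeasurable (F k)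
      (MeasureTheory.volume.restrict (Set.uIoc (0:ℝ) 1)) := by
    apply Filter.Eventually.of_forall
    intro k
    rw [Set.uIoc_of_le (by norm_num : (0:ℝ) ≤ 1)]
    exact ((hFcont k).mono Set.Ioc_subset_Icc_self).aestronglyMeasurable measurableSet_Ioc
  have hDCT := intervalIntegral.tendsto_integral_filter_of_dominated_convergence
    (μ := MeasureTheory.volume) (a := (0:ℝ)) (b := 1) (F := F)
    (f := fun t => (t - 1 / 2) * ⟪d, w⟫) (fun _ => 3 / 2 * M)
    hmeas
    (by
      filter_upwards [hbd] with k hk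
      apply MeasureTheory.ae_of_all
      intro t ht
      rw [Set.uIoc_of_le (by norm_num : (0:ℝ) ≤ 1)] at ht
      exact hk t ht)
    intervalIntegrable_const
    (by
      apply MeasureTheory.ae_of_all
      intro t ht
      rw [Set.uIoc_of_le (by norm_num : (0:ℝ) ≤ 1)] at ht
      exact hlim t ht)
  have hz : (∫ t in (0:ℝ)..1, (t - 1 / 2) * ⟪d, w⟫) = 0 := by
    rw [intervalIntegral.integral_mul_const,
      intervalIntegral.integral_sub intervalIntegrable_id intervalIntegrable_const,
      integral_id, intervalIntegral.integral_const]
    norm_num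
  rw [hz] at hDCT
  exact hDCT.congr hFeq

end TrapAux

/-- the trapezoidal rule for a `C¹` function whose gradient is
semidifferentiable at `ub`. -/
theorem stmt_18 {n : ℕ} (U : Set (Euc n)) (hU : IsOpen U) (hconv : Convex ℝ U)
    (e : Euc n → ℝ) (g : Euc n → Euc n) (ub : Euc n) (hu : ub ∈ U)
    (hgrad : ∀ u ∈ U, HasGradientAt e (g u) u) (hcont : ContinuousOn g U)
    (hsemi : ∀ h : Euc n, ∃ d : Euc n, ∀ (hk : ℕ → Euc n) (tk : ℕ → ℝ),
      Tendsto hk atTop (𝓝 h) → (∀ k, 0 < tk k) → Tendsto tk atTop (𝓝 0) →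
      Tendsto (fun k => (tk k)⁻¹ • (g (ub + tk k • hk k) - g ub)) atTop (𝓝 d)) :
    Tendsto (fun u => (e u - e ub - (1 / 2) * ⟪g u + g ub, u - ub⟫) / ‖u - ub‖ ^ 2)
      (𝓝[U \ {ub}] ub) (𝓝 0) := by
  apply Filter.tendsto_of_subseq_tendsto
  intro ns hns
  have hmem : ∀ᶠ k in atTop, ns k ∈ U \ {ub} :=
    hns.eventually (eventually_mem_nhdsWithin)
  obtain ⟨N, hN⟩ := eventually_atTop.1 hmem
  set v : ℕ → Euc n := fun j => ns (j + N) with hvdef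
  have hvU : ∀ j, v j ∈ U := fun j => (hN (j + N) (Nat.le_add_left N j)).1
  have hvne : ∀ j, v j ≠ ub := fun j => by
    have := (hN (j + N) (Nat.le_add_left N j)).2
    simpa using this
  have hvt : Tendsto v atTop (𝓝 ub) := by
    have h1 : Tendsto ns atTop (𝓝 ub) := hns.mono_right nhdsWithin_le_nhds
    exact h1.comp (tendsto_add_atTop_nat N)
  have hwmem : ∀ j, ‖v j - ub‖⁻¹ • (v j - ub) ∈ Metric.sphere (0 : Euc n) 1 := by
    intro j
    have h0 : v j - ub ≠ 0 := sub_ne_zero.2 (hvne j)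
    rw [mem_sphere_zero_iff_norm, norm_smul, norm_inv, Real.norm_eq_abs,
      abs_of_pos (norm_pos_iff.2 h0)]
    exact inv_mul_cancel₀ (norm_pos_iff.2 h0).ne'
  obtain ⟨w, -, φ, hφ, hc2⟩ := (isCompact_sphere (0 : Euc n) 1).tendsto_subseq hwmem
  refine ⟨fun j => φ j + N, ?_⟩
  exact aux_core hconv hu hgrad hcont hsemi (fun j => v (φ j))
    (fun j => hvU (φ j)) (fun j => hvne (φ j)) (hvt.comp hφ.tendsto_atTop) w hc2
end
end

section
/- Let U ⊆ ℝⁿ be open and convex, let e: U → ℝ be continuously differentiable, and let ū ∈ U. Assume ∇e is strictly differentiable at ū, i.e., there is a symmetric n×n matrix H with (∇e(u') − ∇e(u) − H(u' − u))/‖u' − u‖ → 0 as u, u' → ū with u ≠ u'. Then lim_{u, u' → ū, u ≠ u'} (e(u') − e(u) − ½⟨∇e(u') + ∇e(u), u' − u⟩)/‖u' − u‖² = 0. -/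
open Filter Topology Metric Set
open scoped RealInnerProductSpace NNReal ENNReal

noncomputable section

/-- the two-point trapezoidal rule for a `C¹` function whose gradient is
strictly differentiable at `ub`. -/
theorem stmt_19 {n : ℕ} (U : Set (Euc n)) (hU : IsOpen U) (hconv : Convex ℝ U)
    (e : Euc n → ℝ) (g : Euc n → Euc n) (ub : Euc n) (hu : ub ∈ U)
    (hgrad : ∀ u ∈ U, HasGradientAt e (g u) u) (hcont : ContinuousOn g U)
    (H : Euc n →L[ℝ] Euc n) (hsym : ∀ u v : Euc n, ⟪H u, v⟫ = ⟪u, H v⟫)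
    (hstrict : ∀ ε : ℝ, 0 < ε → ∃ δ > 0, ∀ u ∈ U, ∀ u' ∈ U,
      ‖u - ub‖ < δ → ‖u' - ub‖ < δ → ‖g u' - g u - H (u' - u)‖ ≤ ε * ‖u' - u‖) :
    ∀ ε : ℝ, 0 < ε → ∃ δ > 0, ∀ u ∈ U, ∀ u' ∈ U,
      ‖u - ub‖ < δ → ‖u' - ub‖ < δ → u ≠ u' →
      |e u' - e u - (1 / 2) * ⟪g u' + g u, u' - u⟫| ≤ ε * ‖u' - u‖ ^ 2 := by
  intro ε hε
  obtain ⟨δ, hδ, hδs⟩ := hstrict (ε / 2) (by linarith)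
  refine ⟨δ, hδ, fun u huU u' hu'U hud hu'd _ => ?_⟩
  set v := u' - u with hv
  set γ : ℝ → EuclideanSpace ℝ (Fin n) := fun t => u + t • v with hγ
  have hγmem : ∀ t ∈ Set.Icc (0:ℝ) 1, γ t ∈ U := fun t ht =>
    hconv.add_smul_sub_mem huU hu'U ht
  have hγdist : ∀ t ∈ Set.Icc (0:ℝ) 1, ‖γ t - ub‖ < δ := by
    intro t ht
    have : γ t - ub = (1 - t) • (u - ub) + t • (u' - ub) := by
      simp only [hγ, hv]; module
    rw [this]
    calc ‖(1 - t) • (u - ub) + t • (u' - ub)‖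
        ≤ ‖(1 - t) • (u - ub)‖ + ‖t • (u' - ub)‖ := norm_add_le _ _
      _ = (1 - t) * ‖u - ub‖ + t * ‖u' - ub‖ := by
          rw [norm_smul, norm_smul, Real.norm_eq_abs, Real.norm_eq_abs,
            abs_of_nonneg (by linarith [ht.2]), abs_of_nonneg ht.1]
      _ ≤ (1 - t) * max ‖u - ub‖ ‖u' - ub‖ + t * max ‖u - ub‖ ‖u' - ub‖ :=
          add_le_add (mul_le_mul_of_nonneg_left (le_max_left _ _) (by linarith [ht.2]))
            (mul_le_mul_of_nonneg_left (le_max_right _ _) ht.1)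
      _ = max ‖u - ub‖ ‖u' - ub‖ := by ring
      _ < δ := max_lt hud hu'd
  -- derivative of e along γ
  have hderiv : ∀ t ∈ Set.uIcc (0:ℝ) 1, HasDerivAt (fun t => e (γ t)) ⟪g (γ t), v⟫ t := by
    intro t ht
    rw [Set.uIcc_of_le zero_le_one] at ht
    have hγd : HasDerivAt γ v t := by
      simpa [hγ] using ((hasDerivAt_id t).smul_const v).const_add u
    have := ((hgrad (γ t) (hγmem t ht)).hasFDerivAt.comp_hasDerivAt t hγd)
    simp [InnerProductSpace.toDual_apply_apply] at this
    exact this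
  have hcontγ : ContinuousOn (fun t => ⟪g (γ t), v⟫) (Set.uIcc (0:ℝ) 1) := by
    rw [Set.uIcc_of_le zero_le_one]
    apply ContinuousOn.inner
    · exact hcont.comp (by fun_prop) hγmem
    · exact continuousOn_const
  have hint : IntervalIntegrable (fun t => ⟪g (γ t), v⟫) MeasureTheory.volume 0 1 :=
    hcontγ.intervalIntegrable
  have hFTC : ∫ t in (0:ℝ)..1, ⟪g (γ t), v⟫ = e u' - e u := by
    rw [intervalIntegral.integral_eq_sub_of_hasDerivAt hderiv hint]
    simp [hγ, hv]
  -- the error integrand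
  set f : ℝ → ℝ := fun t => ⟪g (γ t), v⟫ - ((1 - t) * ⟪g u, v⟫ + t * ⟪g u', v⟫) with hf
  have hfint : IntervalIntegrable f MeasureTheory.volume 0 1 := by
    apply hint.sub
    apply ContinuousOn.intervalIntegrable
    fun_prop
  have hval : ∫ t in (0:ℝ)..1, f t = e u' - e u - (1/2) * ⟪g u' + g u, v⟫ := by
    have h0 : (∫ t in (0:ℝ)..1, (1 - t)) = 1/2 := by
      have := intervalIntegral.integral_comp_sub_left (a := (0:ℝ)) (b := 1) (fun t : ℝ => t) 1
      simp only [sub_self, sub_zero] at this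
      rw [this, integral_id]; norm_num
    have h1 : ∫ t in (0:ℝ)..1, ((1 - t) * ⟪g u, v⟫ + t * ⟪g u', v⟫)
        = (1/2) * ⟪g u, v⟫ + (1/2) * ⟪g u', v⟫ := by
      rw [intervalIntegral.integral_add, intervalIntegral.integral_mul_const,
        intervalIntegral.integral_mul_const, h0, integral_id]
      · norm_num
      · exact ((intervalIntegrable_const).sub (continuous_id.intervalIntegrable 0 1)).mul_const _
      · exact (continuous_id.intervalIntegrable 0 1).mul_const _
    rw [hf]
    rw [intervalIntegral.integral_sub hint (by apply ContinuousOn.intervalIntegrable; fun_prop),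
      hFTC, h1, inner_add_left]
    ring
  -- pointwise bound
  have hbound : ∀ t ∈ Set.uIoc (0:ℝ) 1, ‖f t‖ ≤ ε * ‖v‖ ^ 2 := by
    intro t ht
    rw [Set.uIoc_of_le zero_le_one] at ht
    have ht0 : (0:ℝ) ≤ t := le_of_lt ht.1
    have ht1 : t ≤ 1 := ht.2
    have htI : t ∈ Set.Icc (0:ℝ) 1 := ⟨ht0, ht1⟩
    have h1 : ‖g (γ t) - g u - H (t • v)‖ ≤ ε / 2 * ‖v‖ := by
      have := hδs u huU (γ t) (hγmem t htI) hud (hγdist t htI)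
      have he : γ t - u = t • v := by simp [hγ]
      rw [he] at this
      calc ‖g (γ t) - g u - H (t • v)‖ ≤ ε / 2 * ‖t • v‖ := this
        _ = ε / 2 * (t * ‖v‖) := by rw [norm_smul, Real.norm_eq_abs, abs_of_nonneg ht0]
        _ ≤ ε / 2 * ‖v‖ := by
            have ht' : t * ‖v‖ ≤ ‖v‖ := by nlinarith [norm_nonneg v]
            exact mul_le_mul_of_nonneg_left ht' (by linarith)
    have h2 : ‖g u' - g u - H v‖ ≤ ε / 2 * ‖v‖ := by
      simpa [hv] using hδs u huU u' hu'U hud hu'd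
    have key : g (γ t) - ((1 - t) • g u + t • g u')
        = (g (γ t) - g u - H (t • v)) - t • (g u' - g u - H v) := by
      rw [map_smul]; module
    have hnorm : ‖g (γ t) - ((1 - t) • g u + t • g u')‖ ≤ ε * ‖v‖ := by
      rw [key]
      calc ‖(g (γ t) - g u - H (t • v)) - t • (g u' - g u - H v)‖
          ≤ ‖g (γ t) - g u - H (t • v)‖ + ‖t • (g u' - g u - H v)‖ := norm_sub_le _ _
        _ ≤ ε / 2 * ‖v‖ + t * (ε / 2 * ‖v‖) := by
            refine add_le_add h1 ?_
            rw [norm_smul, Real.norm_eq_abs, abs_of_nonneg ht0]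
            exact mul_le_mul_of_nonneg_left h2 ht0
        _ ≤ ε * ‖v‖ := by
            have := mul_le_mul_of_nonneg_right ht1
              (mul_nonneg (by linarith : (0:ℝ) ≤ ε / 2) (norm_nonneg v))
            linarith
    have hfeq : f t = ⟪g (γ t) - ((1 - t) • g u + t • g u'), v⟫ := by
      rw [inner_sub_left, inner_add_left, real_inner_smul_left, real_inner_smul_left]
    rw [Real.norm_eq_abs, hfeq]
    calc |⟪g (γ t) - ((1 - t) • g u + t • g u'), v⟫|
        ≤ ‖g (γ t) - ((1 - t) • g u + t • g u')‖ * ‖v‖ := abs_real_inner_le_norm _ _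
      _ ≤ ε * ‖v‖ * ‖v‖ := mul_le_mul_of_nonneg_right hnorm (norm_nonneg v)
      _ = ε * ‖v‖ ^ 2 := by ring
  have := intervalIntegral.norm_integral_le_of_norm_le_const hbound
  rw [hval] at this
  simpa [abs_of_nonneg] using this
end
end
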